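/- Let p be a prime and 0 < r ≤ s integers. Let G be the group presented by generators x, y subject to the relations x^{p^{s+1}} = y^{p^{s+1}} = [x,[x,y]] = [y,[x,y]] = 1, and let K be the subgroup of G generated by x^{p^r}, y^{p^s} and [x,y]. Then the element z = [x,y]^{p^s} lies in D_3(G,K) = {g ∈ G : g − 1 ∈ I(K)I(G) + I(G)^3}, the subgroup [K,K]·G_3 is trivial, and z has order exactly p (so z ≠ 1 and z^p = 1). In particular the inclusion [K,K]·G_3 ⊆ D_3(G,K) is strict. -/

import Mathlib

open MonoidAlgebra
open scoped commutatorElement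

/-- The additive subgroup `I(K)I(G)` of `ℤ(G)` spanned by the elements `(k-1)(g-1)`,
`k ∈ K`, `g ∈ G`. -/
noncomputable def relAugMulKG {G : Type*} [Group G] (K : Subgroup G) :
    Submodule ℤ (MonoidAlgebra ℤ G) :=
  Submodule.span ℤ {x | ∃ k ∈ K, ∃ g : G, x = (of ℤ G k - 1) * (of ℤ G g - 1)}

/-- The augmentation ideal `I(G)` of `ℤ(G)`, as a `ℤ`-submodule. -/
noncomputable def augmentationSubmodule (G : Type*) [Group G] : Submodule ℤ (MonoidAlgebra ℤ G) :=
  Submodule.span ℤ {x | ∃ g : G, x = of ℤ G g - 1}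

/-- The third relative dimension subgroup
`D₃(G,K) = {g ∈ G | g - 1 ∈ I(K)I(G) + I(G)³}` (as a subset of `G`). -/
noncomputable def D3 {G : Type*} [Group G] (K : Subgroup G) : Set G :=
  {g : G | of ℤ G g - 1 ∈ relAugMulKG K + augmentationSubmodule G ^ 3}

/-- The relations `x^{p^{s+1}} = y^{p^{s+1}} = [x,[x,y]] = [y,[x,y]] = 1` on two
generators `x, y` (given as `FreeGroup.of (0 : Fin 2)`, `FreeGroup.of (1 : Fin 2)`). -/
def exampleRels (p s : ℕ) : Set (FreeGroup (Fin 2)) :=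
  {FreeGroup.of (0 : Fin 2) ^ p ^ (s + 1), FreeGroup.of (1 : Fin 2) ^ p ^ (s + 1),
    ⁅FreeGroup.of (0 : Fin 2), ⁅FreeGroup.of (0 : Fin 2), FreeGroup.of (1 : Fin 2)⁆⁆,
    ⁅FreeGroup.of (1 : Fin 2), ⁅FreeGroup.of (0 : Fin 2), FreeGroup.of (1 : Fin 2)⁆⁆}

section Helpers

variable {G : Type*} [Group G]

lemma pow_mul_comm_aux {x y : G} (hx : Commute x ⁅x, y⁆) (n : ℕ) :
    x ^ n * y = ⁅x, y⁆ ^ n * y * x ^ n := by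
  induction n with
  | zero => simp
  | succ n ih =>
    have h1 : x * ⁅x, y⁆ ^ n = ⁅x, y⁆ ^ n * x := (hx.pow_right n).eq
    have hxy : x * y = ⁅x, y⁆ * y * x := by
      rw [commutatorElement_def]; group
    calc x ^ (n + 1) * y = x * (x ^ n * y) := by rw [pow_succ', mul_assoc]
      _ = x * (⁅x, y⁆ ^ n * y * x ^ n) := by rw [ih]
      _ = (x * ⁅x, y⁆ ^ n) * (y * x ^ n) := by simp only [mul_assoc]
      _ = (⁅x, y⁆ ^ n * x) * (y * x ^ n) := by rw [h1]
      _ = ⁅x, y⁆ ^ n * ((x * y) * x ^ n) := by simp only [mul_assoc]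
      _ = ⁅x, y⁆ ^ n * ((⁅x, y⁆ * y * x) * x ^ n) := by rw [hxy]
      _ = ⁅x, y⁆ ^ (n + 1) * y * x ^ (n + 1) := by
          rw [pow_succ ⁅x, y⁆ n, pow_succ' x n]; simp only [mul_assoc]

lemma commutator_pow_left {x y : G} (hx : Commute x ⁅x, y⁆) (n : ℕ) :
    ⁅x ^ n, y⁆ = ⁅x, y⁆ ^ n := by
  rw [commutatorElement_def, pow_mul_comm_aux hx n, mul_inv_cancel_right, mul_inv_cancel_right]

lemma commutator_pow_right {x y : G} (hy : Commute y ⁅x, y⁆) (n : ℕ) :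
    ⁅x, y ^ n⁆ = ⁅x, y⁆ ^ n := by
  have hyx : ⁅y, x⁆ = ⁅x, y⁆⁻¹ := commutatorElement_inv x y |>.symm
  have h : Commute y ⁅y, x⁆ := by rw [hyx]; exact hy.inv_right
  have h2 := commutator_pow_left h n
  rw [← inv_inv ⁅x, y ^ n⁆, commutatorElement_inv, h2, hyx, inv_pow, inv_inv]

lemma commutator_pow_pow {x y : G} (hx : Commute x ⁅x, y⁆) (hy : Commute y ⁅x, y⁆)
    (m n : ℕ) : ⁅x ^ m, y ^ n⁆ = ⁅x, y⁆ ^ (m * n) := by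
  have h1 : ⁅x, y ^ n⁆ = ⁅x, y⁆ ^ n := commutator_pow_right hy n
  have h2 : Commute x ⁅x, y ^ n⁆ := by rw [h1]; exact hx.pow_right n
  rw [commutator_pow_left h2 m, h1, ← pow_mul, mul_comm n m]

lemma closure_comm {S : Set G} (h : ∀ a ∈ S, ∀ b ∈ S, a * b = b * a) :
    ∀ a ∈ Subgroup.closure S, ∀ b ∈ Subgroup.closure S, a * b = b * a := by
  have step1 : ∀ b ∈ S, Subgroup.closure S ≤ Subgroup.centralizer {b} := by
    intro b hb
    refine (Subgroup.closure_le _).2 fun g hg => Subgroup.mem_centralizer_iff.2 ?_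
    intro c hc
    rw [Set.mem_singleton_iff] at hc; subst hc
    exact h _ hb _ hg
  intro a ha b hb
  have step2 : Subgroup.closure S ≤ Subgroup.centralizer {a} := by
    refine (Subgroup.closure_le _).2 fun g hg => Subgroup.mem_centralizer_iff.2 ?_
    intro c hc
    rw [Set.mem_singleton_iff] at hc; subst hc
    exact (Subgroup.mem_centralizer_iff.1 (step1 g hg ha) g (Set.mem_singleton g)).symm
  exact Subgroup.mem_centralizer_iff.1 (step2 hb) a (Set.mem_singleton a)

variable (K : Subgroup G)

lemma mem_aug (g : G) : of ℤ G g - 1 ∈ augmentationSubmodule G :=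
  Submodule.subset_span ⟨g, rfl⟩

lemma mem_relAug {k : G} (hk : k ∈ K) (g : G) :
    (of ℤ G k - 1) * (of ℤ G g - 1) ∈ relAugMulKG K :=
  Submodule.subset_span ⟨k, hk, g, rfl⟩

lemma aug_mul_of {m : MonoidAlgebra ℤ G} (hm : m ∈ augmentationSubmodule G) (g : G) :
    m * of ℤ G g ∈ augmentationSubmodule G := by
  refine Submodule.span_induction ?_ ?_ ?_ ?_ hm
  · rintro _ ⟨h, rfl⟩
    have : (of ℤ G h - 1) * of ℤ G g = (of ℤ G (h * g) - 1) - (of ℤ G g - 1) := by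
      rw [map_mul]; noncomm_ring
    rw [this]; exact sub_mem (mem_aug _) (mem_aug _)
  · simpa using zero_mem _
  · intro a b _ _ ha hb; rw [add_mul]; exact add_mem ha hb
  · intro r a _ ha; rw [smul_mul_assoc]; exact Submodule.smul_mem _ _ ha

lemma relAug_mul_of {m : MonoidAlgebra ℤ G} (hm : m ∈ relAugMulKG K) (g : G) :
    m * of ℤ G g ∈ relAugMulKG K := by
  refine Submodule.span_induction ?_ ?_ ?_ ?_ hm
  · rintro _ ⟨k, hk, h, rfl⟩
    have : (of ℤ G k - 1) * (of ℤ G h - 1) * of ℤ G g =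
        (of ℤ G k - 1) * (of ℤ G (h * g) - 1) - (of ℤ G k - 1) * (of ℤ G g - 1) := by
      rw [map_mul]; noncomm_ring
    rw [this]; exact sub_mem (mem_relAug K hk _) (mem_relAug K hk _)
  · simpa using zero_mem _
  · intro a b _ _ ha hb; rw [add_mul]; exact add_mem ha hb
  · intro r a _ ha; rw [smul_mul_assoc]; exact Submodule.smul_mem _ _ ha

lemma aug3_mul_of {m : MonoidAlgebra ℤ G} (hm : m ∈ augmentationSubmodule G ^ 3) (g : G) :
    m * of ℤ G g ∈ augmentationSubmodule G ^ 3 := by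
  rw [pow_succ] at hm ⊢
  refine Submodule.mul_induction_on hm ?_ ?_
  · intro a ha b hb
    rw [mul_assoc]
    exact Submodule.mul_mem_mul ha (aug_mul_of hb g)
  · intro a b ha hb; rw [add_mul]; exact add_mem ha hb

lemma triple_mem {t1 t2 t3 : MonoidAlgebra ℤ G} (h1 : t1 ∈ augmentationSubmodule G)
    (h2 : t2 ∈ augmentationSubmodule G) (h3 : t3 ∈ augmentationSubmodule G) :
    t1 * t2 * t3 ∈ augmentationSubmodule G ^ 3 := by
  have e : augmentationSubmodule G ^ 3 =
      augmentationSubmodule G * augmentationSubmodule G * augmentationSubmodule G := by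
    rw [pow_succ, pow_succ, pow_one]
  rw [e]
  exact Submodule.mul_mem_mul (Submodule.mul_mem_mul h1 h2) h3

lemma pow_sub_one_eq (a : MonoidAlgebra ℤ G) (n : ℕ) :
    a ^ n - 1 = (n : ℤ) • (a - 1) + (∑ i ∈ Finset.range n, (a ^ i - 1)) * (a - 1) := by
  induction n with
  | zero => simp
  | succ n ih =>
    rw [Finset.sum_range_succ, add_mul, pow_succ]
    have e : a ^ n * a - 1 = (a ^ n - 1) + (a ^ n - 1) * (a - 1) + (a - 1) := by
      noncomm_ring
    rw [e, ih, Nat.cast_succ, add_smul, one_smul]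
    abel

lemma key_mem {x y : G} (n : ℕ) (hxK : x ^ n ∈ K) (hyK : y ^ n ∈ K) :
    of ℤ G ⁅x ^ n, y⁆ - 1 ∈ relAugMulKG K + augmentationSubmodule G ^ 3 := by
  rw [Submodule.add_eq_sup]
  set I := augmentationSubmodule G with hI
  set J := relAugMulKG K with hJ
  set a : MonoidAlgebra ℤ G := of ℤ G x with ha
  set b : MonoidAlgebra ℤ G := of ℤ G y with hb
  set tx : MonoidAlgebra ℤ G := ∑ i ∈ Finset.range n, (a ^ i - 1) with htx
  set ty : MonoidAlgebra ℤ G := ∑ i ∈ Finset.range n, (b ^ i - 1) with hty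
  have hpow : ∀ g : G, ∀ i : ℕ, (of ℤ G g) ^ i = of ℤ G (g ^ i) := fun g i => (map_pow _ _ _).symm
  have htxI : tx ∈ I := by
    refine Submodule.sum_mem _ fun i _ => ?_
    rw [ha, hpow x i]; exact mem_aug _
  have htyI : ty ∈ I := by
    refine Submodule.sum_mem _ fun i _ => ?_
    rw [hb, hpow y i]; exact mem_aug _
  have hu : a ^ n - 1 = (n : ℤ) • (a - 1) + tx * (a - 1) := pow_sub_one_eq a n
  have hv : b ^ n - 1 = (n : ℤ) • (b - 1) + ty * (b - 1) := pow_sub_one_eq b n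
  have hJ1 : (a ^ n - 1) * (b - 1) ∈ J := by
    rw [ha, hb, hpow x n]; exact mem_relAug K hxK y
  have hJ2 : (b ^ n - 1) * (a - 1) ∈ J := by
    rw [ha, hb, hpow y n]; exact mem_relAug K hyK x
  have e1 : (b - 1) * (a ^ n - 1) = (n : ℤ) • ((b - 1) * (a - 1)) + (b - 1) * tx * (a - 1) := by
    rw [hu, mul_add, mul_smul_comm, ← mul_assoc]
  have e2 : (n : ℤ) • ((b - 1) * (a - 1)) = (b ^ n - 1) * (a - 1) - ty * (b - 1) * (a - 1) := by
    have e3 : (n : ℤ) • (b - 1) = (b ^ n - 1) - ty * (b - 1) := by rw [hv]; abel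
    rw [← smul_mul_assoc, e3, sub_mul, mul_assoc]
  have hbu : (b - 1) * (a ^ n - 1) ∈ J ⊔ I ^ 3 := by
    rw [e1, e2]
    refine add_mem (sub_mem ?_ ?_) ?_
    · exact Submodule.mem_sup_left hJ2
    · exact Submodule.mem_sup_right (triple_mem htyI (mem_aug y) (mem_aug x))
    · exact Submodule.mem_sup_right (triple_mem (mem_aug y) htxI (mem_aug x))
  have hw : (a ^ n - 1) * (b - 1) - (b - 1) * (a ^ n - 1) ∈ J ⊔ I ^ 3 :=
    sub_mem (Submodule.mem_sup_left hJ1) hbu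
  have main : of ℤ G ⁅x ^ n, y⁆ - 1 =
      ((a ^ n - 1) * (b - 1) - (b - 1) * (a ^ n - 1)) * of ℤ G ((y * x ^ n)⁻¹) := by
    have expand : (a ^ n - 1) * (b - 1) - (b - 1) * (a ^ n - 1)
        = of ℤ G (x ^ n * y) - of ℤ G (y * x ^ n) := by
      rw [ha, hb, map_mul, map_mul, map_pow]
      noncomm_ring
    rw [expand, sub_mul, ← map_mul, ← map_mul]
    have g1 : x ^ n * y * (y * x ^ n)⁻¹ = ⁅x ^ n, y⁆ := by
      rw [commutatorElement_def]; group
    have g2 : y * x ^ n * (y * x ^ n)⁻¹ = 1 := mul_inv_cancel _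
    rw [g1, g2, map_one]
  rw [main]
  rw [Submodule.mem_sup] at hw ⊢
  obtain ⟨mj, hmj, mi, hmi, hsum⟩ := hw
  exact ⟨mj * of ℤ G ((y * x ^ n)⁻¹), relAug_mul_of K hmj _,
    mi * of ℤ G ((y * x ^ n)⁻¹), aug3_mul_of hmi _,
    by rw [← hsum, ← add_mul]⟩

end Helpers

@[ext] structure Heis (n : ℕ) where
  a : ZMod n
  b : ZMod n
  c : ZMod n

namespace Heis
variable {n : ℕ}

instance : Mul (Heis n) := ⟨fun u v => ⟨u.a + v.a, u.b + v.b, u.c + v.c + u.b * v.a⟩⟩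
instance : One (Heis n) := ⟨⟨0, 0, 0⟩⟩
instance : Inv (Heis n) := ⟨fun u => ⟨-u.a, -u.b, -u.c + u.b * u.a⟩⟩

lemma mul_def (u v : Heis n) : u * v = ⟨u.a + v.a, u.b + v.b, u.c + v.c + u.b * v.a⟩ := rfl
lemma one_def : (1 : Heis n) = ⟨0, 0, 0⟩ := rfl
lemma inv_def (u : Heis n) : u⁻¹ = ⟨-u.a, -u.b, -u.c + u.b * u.a⟩ := rfl

instance : Group (Heis n) where
  mul_assoc u v w := by ext <;> simp [mul_def] <;> ring
  one_mul u := by ext <;> simp [mul_def, one_def]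
  mul_one u := by ext <;> simp [mul_def, one_def]
  inv_mul_cancel u := by ext <;> simp [mul_def, inv_def, one_def] <;> ring

lemma X_pow (m : ℕ) : (⟨1, 0, 0⟩ : Heis n) ^ m = ⟨(m : ZMod n), 0, 0⟩ := by
  induction m with
  | zero => rw [pow_zero]; simp [one_def]
  | succ m ih => rw [pow_succ, ih]; ext <;> simp [mul_def] <;> push_cast <;> ring

lemma Y_pow (m : ℕ) : (⟨0, 1, 0⟩ : Heis n) ^ m = ⟨0, (m : ZMod n), 0⟩ := by
  induction m with
  | zero => rw [pow_zero]; simp [one_def]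
  | succ m ih => rw [pow_succ, ih]; ext <;> simp [mul_def] <;> push_cast <;> ring

lemma C_pow (m : ℕ) : (⟨0, 0, -1⟩ : Heis n) ^ m = ⟨0, 0, -(m : ZMod n)⟩ := by
  induction m with
  | zero => rw [pow_zero]; simp [one_def]
  | succ m ih => rw [pow_succ, ih]; ext <;> simp [mul_def] <;> push_cast <;> ring

lemma central (γ : ZMod n) (u : Heis n) : (⟨0, 0, γ⟩ : Heis n) * u = u * ⟨0, 0, γ⟩ := by
  ext <;> simp [mul_def] <;> ring

lemma commXY : ⁅(⟨1, 0, 0⟩ : Heis n), (⟨0, 1, 0⟩ : Heis n)⁆ = ⟨0, 0, -1⟩ := by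
  rw [commutatorElement_def]
  ext <;> simp [mul_def, inv_def] <;> ring

end Heis

set_option maxHeartbeats 1600000 in
/-- **Example 2.4**: let `p` be a prime, `0 < r ≤ s`, `G = ⟨x,y ∣ x^{p^{s+1}} = y^{p^{s+1}}
= [x,[x,y]] = [y,[x,y]] = 1⟩` and `K = ⟨x^{p^r}, y^{p^s}, [x,y]⟩`.  Then
`z = [x,y]^{p^s}` lies in `D₃(G,K)`, the subgroup `[K,K]·G₃` is trivial, and `z` has
order exactly `p`; in particular the inclusion `[K,K]·G₃ ⊆ D₃(G,K)` is strict. -/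
theorem relative_dim3_counterexample (p : ℕ) (hp : p.Prime) (r s : ℕ)
    (hr : 0 < r) (hrs : r ≤ s) :
    letI G := PresentedGroup (exampleRels p s)
    letI x : G := PresentedGroup.of (0 : Fin 2)
    letI y : G := PresentedGroup.of (1 : Fin 2)
    letI K : Subgroup G := Subgroup.closure {x ^ p ^ r, y ^ p ^ s, ⁅x, y⁆}
    letI z : G := ⁅x, y⁆ ^ p ^ s
    z ∈ D3 K ∧ ⁅K, K⁆ ⊔ (⊤ : Subgroup G).lowerCentralSeries 2 = (⊥ : Subgroup G) ∧ orderOf z = p ∧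
      ¬ ((⁅K, K⁆ ⊔ (⊤ : Subgroup G).lowerCentralSeries 2 : Subgroup G) : Set G) = D3 K := by
  set x : PresentedGroup (exampleRels p s) := PresentedGroup.of (0 : Fin 2) with hxd
  set y : PresentedGroup (exampleRels p s) := PresentedGroup.of (1 : Fin 2) with hyd
  set K : Subgroup (PresentedGroup (exampleRels p s)) :=
    Subgroup.closure {x ^ p ^ r, y ^ p ^ s, ⁅x, y⁆} with hKd
  set z : PresentedGroup (exampleRels p s) := ⁅x, y⁆ ^ p ^ s with hzd
  -- relations hold
  have hrel : ∀ w ∈ exampleRels p s, PresentedGroup.mk (exampleRels p s) w = 1 := fun w hw =>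
    (QuotientGroup.eq_one_iff w).2 (Subgroup.subset_normalClosure hw)
  have hx_ord : x ^ p ^ (s + 1) = 1 := by
    have e : x ^ p ^ (s + 1)
        = PresentedGroup.mk (exampleRels p s) (FreeGroup.of (0 : Fin 2) ^ p ^ (s + 1)) := by
      rw [map_pow]; rfl
    rw [e]; exact hrel _ (by simp [exampleRels])
  have hcx : ⁅x, ⁅x, y⁆⁆ = 1 := by
    have e : ⁅x, ⁅x, y⁆⁆ = PresentedGroup.mk (exampleRels p s)
        ⁅FreeGroup.of (0 : Fin 2), ⁅FreeGroup.of (0 : Fin 2), FreeGroup.of (1 : Fin 2)⁆⁆ := by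
      rw [map_commutatorElement, map_commutatorElement]; rfl
    rw [e]; exact hrel _ (by simp [exampleRels])
  have hcy : ⁅y, ⁅x, y⁆⁆ = 1 := by
    have e : ⁅y, ⁅x, y⁆⁆ = PresentedGroup.mk (exampleRels p s)
        ⁅FreeGroup.of (1 : Fin 2), ⁅FreeGroup.of (0 : Fin 2), FreeGroup.of (1 : Fin 2)⁆⁆ := by
      rw [map_commutatorElement, map_commutatorElement]; rfl
    rw [e]; exact hrel _ (by simp [exampleRels])
  have hCx : Commute x ⁅x, y⁆ := commutatorElement_eq_one_iff_commute.1 hcx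
  have hCy : Commute y ⁅x, y⁆ := commutatorElement_eq_one_iff_commute.1 hcy
  have hcN : ⁅x, y⁆ ^ p ^ (s + 1) = 1 := by
    rw [← commutator_pow_left hCx, hx_ord, commutatorElement_one_left]
  -- generation
  have htop : Subgroup.closure ({x, y} : Set (PresentedGroup (exampleRels p s))) = ⊤ := by
    have h0 := PresentedGroup.closure_range_of (exampleRels p s)
    have himg : Set.range (PresentedGroup.of (rels := exampleRels p s))
        = ({x, y} : Set (PresentedGroup (exampleRels p s))) := by
      ext g
      constructor
      · rintro ⟨i, rfl⟩
        fin_cases i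
        · exact Set.mem_insert _ _
        · exact Set.mem_insert_iff.2 (Or.inr rfl)
      · rintro (rfl | rfl)
        · exact ⟨0, rfl⟩
        · exact ⟨1, rfl⟩
    rw [himg] at h0; exact h0
  -- the commutator is central
  have hcenter : ⁅x, y⁆ ∈ Subgroup.center (PresentedGroup (exampleRels p s)) := by
    rw [Subgroup.mem_center_iff]
    intro g
    have hg : g ∈ Subgroup.closure ({x, y} : Set (PresentedGroup (exampleRels p s))) :=
      htop.symm ▸ Subgroup.mem_top g
    have hle : Subgroup.closure ({x, y} : Set (PresentedGroup (exampleRels p s)))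
        ≤ Subgroup.centralizer {⁅x, y⁆} := by
      refine (Subgroup.closure_le _).2 ?_
      rintro g' (rfl | rfl)
      · exact Subgroup.mem_centralizer_iff.2 (by
          rintro c hc; rw [Set.mem_singleton_iff] at hc; subst hc; exact hCx.symm.eq)
      · exact Subgroup.mem_centralizer_iff.2 (by
          rintro c hc; rw [Set.mem_singleton_iff] at hc; subst hc; exact hCy.symm.eq)
    exact (Subgroup.mem_centralizer_iff.1 (hle hg) _ (Set.mem_singleton _)).symm
  -- the quotient by the center is abelian
  have hQ : ∀ u v : PresentedGroup (exampleRels p s) ⧸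
      Subgroup.center (PresentedGroup (exampleRels p s)), u * v = v * u := by
    set π := QuotientGroup.mk' (Subgroup.center (PresentedGroup (exampleRels p s))) with hπd
    have hsur : Function.Surjective π := QuotientGroup.mk'_surjective _
    have htopQ : Subgroup.closure ({π x, π y} : Set _) = ⊤ := by
      rw [← Set.image_pair, ← MonoidHom.map_closure, htop, Subgroup.map_top_of_surjective _ hsur]
    intro u v
    have hu : u ∈ Subgroup.closure ({π x, π y} : Set _) := htopQ.symm ▸ Subgroup.mem_top u
    have hv : v ∈ Subgroup.closure ({π x, π y} : Set _) := htopQ.symm ▸ Subgroup.mem_top v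
    refine closure_comm ?_ u hu v hv
    have key : π x * π y = π y * π x := by
      have h1 : π ⁅x, y⁆ = 1 := (QuotientGroup.eq_one_iff _).2 hcenter
      rw [map_commutatorElement] at h1
      exact commutatorElement_eq_one_iff_mul_comm.1 h1
    rintro a (rfl | rfl) b (rfl | rfl)
    exacts [rfl, key, key.symm, rfl]
  -- third term of the lower central series is trivial
  have hcomm_center : (⊤ : Subgroup (PresentedGroup (exampleRels p s))).lowerCentralSeries 1
      ≤ Subgroup.center (PresentedGroup (exampleRels p s)) := by
    rw [Subgroup.top_lowerCentralSeries_one, commutator_def]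
    refine Subgroup.commutator_le.2 fun g1 _ g2 _ => ?_
    have h1 : QuotientGroup.mk' (Subgroup.center (PresentedGroup (exampleRels p s))) ⁅g1, g2⁆
        = 1 := by
      rw [map_commutatorElement]
      exact commutatorElement_eq_one_iff_mul_comm.2 (hQ _ _)
    exact (QuotientGroup.eq_one_iff _).1 h1
  have hlcs2 : (⊤ : Subgroup (PresentedGroup (exampleRels p s))).lowerCentralSeries 2 = ⊥ := by
    rw [eq_bot_iff, Subgroup.lowerCentralSeries_succ]
    refine Subgroup.commutator_le.2 fun g1 hg1 g2 _ => ?_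
    rw [Subgroup.mem_bot]
    exact commutatorElement_eq_one_iff_mul_comm.2
      (Subgroup.mem_center_iff.1 (hcomm_center hg1) g2).symm
  -- K is abelian
  have hcomm_rs : x ^ p ^ r * y ^ p ^ s = y ^ p ^ s * x ^ p ^ r := by
    have h1 : ⁅x ^ p ^ r, y ^ p ^ s⁆ = ⁅x, y⁆ ^ (p ^ r * p ^ s) :=
      commutator_pow_pow hCx hCy _ _
    have e : p ^ r * p ^ s = p ^ (s + 1) * p ^ (r - 1) := by
      rw [← pow_add, ← pow_add]; congr 1; omega
    rw [e, pow_mul, hcN, one_pow] at h1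
    exact commutatorElement_eq_one_iff_mul_comm.1 h1
  have hKcomm : ∀ a ∈ K, ∀ b ∈ K, a * b = b * a := by
    refine closure_comm ?_
    rintro a (rfl | rfl | rfl) b (rfl | rfl | rfl)
    · rfl
    · exact hcomm_rs
    · exact (hCx.pow_left _).eq
    · exact hcomm_rs.symm
    · rfl
    · exact (hCy.pow_left _).eq
    · exact ((hCx.pow_left _).symm).eq
    · exact ((hCy.pow_left _).symm).eq
    · rfl
  have hKK : ⁅K, K⁆ = ⊥ := by
    rw [eq_bot_iff]
    refine Subgroup.commutator_le.2 fun a ha b hb => ?_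
    rw [Subgroup.mem_bot]
    exact commutatorElement_eq_one_iff_mul_comm.2 (hKcomm a ha b hb)
  have part2 : ⁅K, K⁆ ⊔ (⊤ : Subgroup (PresentedGroup (exampleRels p s))).lowerCentralSeries 2
      = (⊥ : Subgroup (PresentedGroup (exampleRels p s))) := by
    rw [hKK, hlcs2, bot_sup_eq]
  -- z ∈ D3 K
  have hxsK : x ^ p ^ s ∈ K := by
    have e : x ^ p ^ s = (x ^ p ^ r) ^ p ^ (s - r) := by
      rw [← pow_mul, ← pow_add, Nat.add_sub_cancel' hrs]
    rw [e]
    exact Subgroup.pow_mem _ (Subgroup.subset_closure (by simp)) _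
  have hysK : y ^ p ^ s ∈ K := Subgroup.subset_closure (by simp)
  have hzc : z = ⁅x ^ p ^ s, y⁆ := by
    rw [hzd, commutator_pow_left hCx]
  have part1 : z ∈ D3 K := by
    show of ℤ (PresentedGroup (exampleRels p s)) z - 1
      ∈ relAugMulKG K + augmentationSubmodule (PresentedGroup (exampleRels p s)) ^ 3
    rw [hzc]
    exact key_mem K _ hxsK hysK
  -- order of z
  have hzp : z ^ p = 1 := by
    rw [hzd, ← pow_mul, ← pow_succ]
    exact hcN
  have hone : (1 : ℕ) ≤ p ^ (s + 1) := Nat.one_le_iff_ne_zero.2 (pow_ne_zero _ hp.pos.ne')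
  -- homomorphism to the Heisenberg model
  have hrelsH : ∀ w ∈ exampleRels p s,
      FreeGroup.lift (![⟨1, 0, 0⟩, ⟨0, 1, 0⟩] : Fin 2 → Heis (p ^ (s + 1))) w = 1 := by
    intro w hw
    rcases hw with rfl | rfl | rfl | rfl
    · rw [map_pow, FreeGroup.lift_apply_of]
      show (⟨1, 0, 0⟩ : Heis (p ^ (s + 1))) ^ p ^ (s + 1) = 1
      rw [Heis.X_pow, Heis.one_def, ZMod.natCast_self]
    · rw [map_pow, FreeGroup.lift_apply_of]
      show (⟨0, 1, 0⟩ : Heis (p ^ (s + 1))) ^ p ^ (s + 1) = 1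
      rw [Heis.Y_pow, Heis.one_def, ZMod.natCast_self]
    · rw [map_commutatorElement, map_commutatorElement, FreeGroup.lift_apply_of, FreeGroup.lift_apply_of]
      show ⁅(⟨1, 0, 0⟩ : Heis (p ^ (s + 1))),
        ⁅(⟨1, 0, 0⟩ : Heis (p ^ (s + 1))), (⟨0, 1, 0⟩ : Heis (p ^ (s + 1)))⁆⁆ = 1
      rw [Heis.commXY]
      exact commutatorElement_eq_one_iff_mul_comm.2 (Heis.central (-1) _).symm
    · rw [map_commutatorElement, map_commutatorElement, FreeGroup.lift_apply_of, FreeGroup.lift_apply_of]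
      show ⁅(⟨0, 1, 0⟩ : Heis (p ^ (s + 1))),
        ⁅(⟨1, 0, 0⟩ : Heis (p ^ (s + 1))), (⟨0, 1, 0⟩ : Heis (p ^ (s + 1)))⁆⁆ = 1
      rw [Heis.commXY]
      exact commutatorElement_eq_one_iff_mul_comm.2 (Heis.central (-1) _).symm
  have hφz : (PresentedGroup.toGroup hrelsH) z
      = (⟨0, 0, -((p ^ s : ℕ) : ZMod (p ^ (s + 1)))⟩ : Heis (p ^ (s + 1))) := by
    rw [hzd, map_pow, map_commutatorElement]
    have h0 : (PresentedGroup.toGroup hrelsH) x = (⟨1, 0, 0⟩ : Heis (p ^ (s + 1))) := by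
      rw [hxd]; exact PresentedGroup.toGroup.of hrelsH
    have h1 : (PresentedGroup.toGroup hrelsH) y = (⟨0, 1, 0⟩ : Heis (p ^ (s + 1))) := by
      rw [hyd]; exact PresentedGroup.toGroup.of hrelsH
    rw [h0, h1, Heis.commXY, Heis.C_pow]
  have hzne : z ≠ 1 := by
    intro h
    have h2 := congrArg (PresentedGroup.toGroup hrelsH) h
    rw [map_one, hφz, Heis.one_def] at h2
    have h3 : -((p ^ s : ℕ) : ZMod (p ^ (s + 1))) = 0 := congrArg Heis.c h2
    rw [neg_eq_zero, ZMod.natCast_eq_zero_iff] at h3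
    have h4 := Nat.le_of_dvd (pow_pos hp.pos s) h3
    exact absurd h4 (not_le.2 (Nat.pow_lt_pow_right hp.one_lt (Nat.lt_succ_self s)))
  have part3 : orderOf z = p := by
    haveI := Fact.mk hp
    exact orderOf_eq_prime hzp hzne
  refine ⟨part1, part2, part3, ?_⟩
  intro heq
  have hz' : z ∈ ((⁅K, K⁆ ⊔ (⊤ : Subgroup (PresentedGroup (exampleRels p s))).lowerCentralSeries 2 :
      Subgroup (PresentedGroup (exampleRels p s))) : Set (PresentedGroup (exampleRels p s))) := by
    rw [heq]; exact part1
  rw [part2] at hz'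
  have : z = 1 := by simpa [Subgroup.coe_bot] using hz'
  exact hzne this
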